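/- Let μ, σ, r, δ > 0 satisfy δ < (μ² + 2rσ²)/(2μ), let β := (1/δ)(r + μ²/(2σ²)), let α > 0, and define V(x) := α·e^{−βx}. Then for every x ∈ ℝ, min_{u ∈ [0,1]} [ (1/2)u²σ²·V''(x) + (uμ − δ)·V'(x) − r·V(x) ] = 0, and the minimum over [0,1] is attained at u* = 2δμ/(2rσ² + μ²), which lies in the open interval (0,1). -/

import Mathlib

/-- Low-debt-liability case of proportional reinsurance: the exponential candidate
value function `V x = α * exp (-β x)` with `β = (1/δ)(r + μ²/(2σ²))` solves the HJB
equation, the minimum over `u ∈ [0,1]` of the HJB operator is `0` and is attained at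
`u* = 2δμ/(2rσ² + μ²) ∈ (0,1)`. -/
theorem stmt_0 (μ σ r δ α β : ℝ) (hμ : 0 < μ) (hσ : 0 < σ) (hr : 0 < r) (hδ : 0 < δ)
    (hα : 0 < α)
    (hlow : δ < (μ ^ 2 + 2 * r * σ ^ 2) / (2 * μ))
    (hβ : β = (1 / δ) * (r + μ ^ 2 / (2 * σ ^ 2)))
    (V : ℝ → ℝ) (hV : ∀ x, V x = α * Real.exp (-β * x))
    (ustar : ℝ) (hustar : ustar = 2 * δ * μ / (2 * r * σ ^ 2 + μ ^ 2)) :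
    ustar ∈ Set.Ioo (0 : ℝ) 1 ∧
    ∀ x : ℝ,
      IsMinOn
        (fun u : ℝ =>
          (1 / 2) * u ^ 2 * σ ^ 2 * deriv (deriv V) x + (u * μ - δ) * deriv V x - r * V x)
        (Set.Icc 0 1) ustar ∧
      (1 / 2) * ustar ^ 2 * σ ^ 2 * deriv (deriv V) x + (ustar * μ - δ) * deriv V x
        - r * V x = 0 := by
  have hσ2 : (0:ℝ) < σ ^ 2 := by positivity
  have hden : (0:ℝ) < 2 * r * σ ^ 2 + μ ^ 2 := by positivity
  have hδ' : δ ≠ 0 := ne_of_gt hδ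
  have hσ' : (σ:ℝ) ^ 2 ≠ 0 := ne_of_gt hσ2
  have hden' : (2 * r * σ ^ 2 + μ ^ 2) ≠ 0 := ne_of_gt hden
  -- key algebraic identities
  have hkey : σ ^ 2 * β * ustar = μ := by
    rw [hβ, hustar]; field_simp
  have hconst : δ * β - r = (1 / 2) * σ ^ 2 * β ^ 2 * ustar ^ 2 := by
    rw [hβ, hustar]; field_simp; ring
  have hβpos : 0 < β := by
    rw [hβ]; positivity
  -- derivatives
  have hde : ∀ (c x : ℝ), HasDerivAt (fun y => c * Real.exp (-β * y))
      (c * (-β) * Real.exp (-β * x)) x := by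
    intro c x
    have h1 : HasDerivAt (fun y : ℝ => -β * y) (-β) x := by
      simpa using (hasDerivAt_id x).const_mul (-β)
    have h2 := (Real.hasDerivAt_exp (-β * x)).comp x h1
    have h3 := h2.const_mul c
    exact h3.congr_deriv (by ring)
  have hVfun : V = fun y => α * Real.exp (-β * y) := funext hV
  have hd1 : deriv V = fun y => (α * (-β)) * Real.exp (-β * y) := by
    funext x
    rw [hVfun]
    exact (hde α x).deriv
  have hd2 : deriv (deriv V) = fun y => (α * (-β) * (-β)) * Real.exp (-β * y) := by
    funext x
    rw [hd1]
    exact (hde (α * (-β)) x).deriv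
  -- u* in (0,1)
  have hmem : ustar ∈ Set.Ioo (0:ℝ) 1 := by
    constructor
    · rw [hustar]; positivity
    · rw [hustar]
      rw [div_lt_one hden]
      have h2μ : (0:ℝ) < 2 * μ := by positivity
      have h := (lt_div_iff₀ h2μ).mp hlow
      nlinarith
  refine ⟨hmem, fun x => ?_⟩
  set E := Real.exp (-β * x) with hE
  have hEpos : 0 < E := Real.exp_pos _
  have hform : ∀ u : ℝ,
      (1 / 2) * u ^ 2 * σ ^ 2 * deriv (deriv V) x + (u * μ - δ) * deriv V x - r * V x
        = α * E * ((1 / 2) * σ ^ 2 * β ^ 2 * (u - ustar) ^ 2) := by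
    intro u
    rw [hd2]
    simp only [hd1, hV, ← hE]
    linear_combination (α * E * u * β) * hkey + (α * E) * hconst
  constructor
  · intro u hu
    simp only [Set.mem_setOf_eq, hform]
    have : (0:ℝ) ≤ (1 / 2) * σ ^ 2 * β ^ 2 * (u - ustar) ^ 2 := by positivity
    nlinarith [this, mul_pos hα hEpos]
  · rw [hform ustar]; ring
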